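/- Let Q be an N×N real symmetric positive semidefinite matrix and, for each z in a finite set Z, let Y(z) ∈ ℝ^N. Then the following are equivalent: (i) for every function g : Z → ℝ with Σ_{z∈Z} g(z) = 0, the vector τ_g = Σ_{z∈Z} g(z) Y(z) satisfies τ_g′ Q τ_g = 0; (ii) Q ( Y(z) − Y(z*) ) = 0 for all z, z* ∈ Z. (In the setting of Theorem 2, this says the upper bound V_Q(τ̂) on Var(τ̂) is attained for every treatment contrast if and only if the generalized additivity condition (ii) holds.) -/

import Mathlib

open Finset

/-- Theorem 2, part (3): for a real symmetric positive semidefinite matrix `Q`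
and potential-outcome vectors `Y(z) ∈ ℝ^N`, `z ∈ Z`, the quadratic form
`τ_g′ Q τ_g` vanishes for every contrast vector `τ_g = ∑_z g(z) Y(z)`
(with `∑_z g(z) = 0`) if and only if the generalized additivity condition
`Q(Y(z) − Y(z*)) = 0` holds for all `z, z* ∈ Z`. -/
theorem theorem2_part3 {N : ℕ} {Z : Type*} [Fintype Z]
    (Q : Matrix (Fin N) (Fin N) ℝ) (hQ : Q.PosSemidef)
    (Y : Z → Fin N → ℝ) :
    (∀ g : Z → ℝ, ∑ z, g z = 0 →
      ∑ i, ∑ j, Q i j * (∑ z, g z * Y z i) * (∑ z, g z * Y z j) = 0) ↔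
    (∀ z zStar : Z, Q.mulVec (Y z - Y zStar) = 0) := by
  classical
  have key : ∀ τ : Fin N → ℝ,
      ∑ i, ∑ j, Q i j * τ i * τ j = dotProduct τ (Q.mulVec τ) := by
    intro τ
    simp only [dotProduct, Matrix.mulVec, Finset.mul_sum]
    exact Finset.sum_congr rfl fun i _ => Finset.sum_congr rfl fun j _ => by ring
  constructor
  · intro h z zStar
    set g : Z → ℝ := fun w => (if w = z then (1:ℝ) else 0) - (if w = zStar then 1 else 0)
    have hg : ∑ w, g w = 0 := by simp [g]
    have hτ : ∀ i, (∑ w, g w * Y w i) = Y z i - Y zStar i := by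
      intro i
      simp [g, sub_mul, Finset.sum_sub_distrib, Finset.sum_ite_eq']
    have := h g hg
    simp only [hτ] at this
    rw [key] at this
    have := (hQ.dotProduct_mulVec_zero_iff (Y z - Y zStar)).mp (by
      rw [star_trivial]; exact (this : dotProduct (Y z - Y zStar) (Q.mulVec (Y z - Y zStar)) = 0))
    exact this
  · intro h g hg
    rw [key]
    set τ : Fin N → ℝ := fun i => ∑ w, g w * Y w i
    have hQτ : Q.mulVec τ = 0 := by
      rcases isEmpty_or_nonempty Z with hZ | ⟨⟨z0⟩⟩
      · have : τ = 0 := by funext i; simp [τ]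
        simp [this]
      · have hτ' : τ = ∑ w, g w • (Y w - Y z0) := by
          funext i
          simp only [τ, Finset.sum_apply, Pi.smul_apply, Pi.sub_apply, smul_eq_mul,
            mul_sub, Finset.sum_sub_distrib]
          rw [← Finset.sum_mul, hg]
          ring
        rw [hτ']
        have hlin : Q.mulVec (∑ w, g w • (Y w - Y z0)) = ∑ w, g w • Q.mulVec (Y w - Y z0) := by
          simp only [← Matrix.mulVecLin_apply, map_sum, map_smul]
        rw [hlin]
        simp [h _ z0]
    rw [hQτ]
    simp
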